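/- Let p₁, p₂ ∈ ℂ[t] be monic, d_j = deg p_j + 1, p̂_j(t) = t^{d_j−1}p_j(1/t), and R = ℂ[x₁,x₂,y₁,y₂]/(y₁x₁^{d₁} − x₂ + p̂₁(x₁), y₂x₂^{d₂} − x₁ + p̂₂(x₂)). Then every unit of R is a nonzero constant: R^× = ℂ^×. -/

import Mathlib

open MvPolynomial

noncomputable section

/-- Relations defining the coordinate ring of `S_{p₁,p₂} ⊆ ℂ⁴`:
variables `x₁ = X 0`, `x₂ = X 1`, `y₁ = X 2`, `y₂ = X 3`;
`p̂ⱼ(t) = t^(dⱼ-1)·pⱼ(1/t)` is `pⱼ.reverse`. -/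
abbrev srel (p₁ p₂ : Polynomial ℂ) (d₁ d₂ : ℕ) : Set (MvPolynomial (Fin 4) ℂ) :=
  {X 2 * X 0 ^ d₁ - X 1 + Polynomial.aeval (X 0) p₁.reverse,
   X 3 * X 1 ^ d₂ - X 0 + Polynomial.aeval (X 1) p₂.reverse}

/-- The coordinate ring `R` of `S_{p₁,p₂}`. -/
abbrev SRing (p₁ p₂ : Polynomial ℂ) (d₁ d₂ : ℕ) : Type :=
  MvPolynomial (Fin 4) ℂ ⧸ Ideal.span (srel p₁ p₂ d₁ d₂)

set_option synthInstance.maxHeartbeats 1000000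
set_option maxHeartbeats 1000000

namespace Stmt16Aux

lemma finSuccEquiv_C' {n : ℕ} (a : ℂ) : (finSuccEquiv ℂ n) (C a) = Polynomial.C (C a) := by
  have := congrArg (finSuccEquiv ℂ n)
    (congrFun (congrArg (fun f => f.toFun) (finSuccEquiv_comp_C_eq_C (R := ℂ) n)) a)
  simpa using this.symm

lemma unit_eq_C (v : MvPolynomial (Fin 2) ℂ) (h : IsUnit v) : ∃ c : ℂˣ, v = C (c : ℂ) := by
  have h2 := h.map (finSuccEquiv ℂ 1)
  rw [Polynomial.isUnit_iff] at h2
  obtain ⟨r, hr, hrv⟩ := h2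
  have h1 := hr.map (finSuccEquiv ℂ 0)
  rw [Polynomial.isUnit_iff] at h1
  obtain ⟨s, hs, hsr⟩ := h1
  have hsC : s = C (s.coeff 0) := eq_C_of_isEmpty s
  have hs0 : IsUnit (s.coeff 0) := by
    rw [hsC, isUnit_map_iff] at hs; exact hs
  refine ⟨hs0.unit, ?_⟩
  set a := s.coeff 0
  have hrC : r = C a := by
    apply (finSuccEquiv ℂ 0).injective
    rw [← hsr, hsC, finSuccEquiv_C']
  apply (finSuccEquiv ℂ 1).injective
  rw [← hrv, hrC, finSuccEquiv_C']
  congr 2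

lemma prime_X0_P4 : Prime (X 0 : MvPolynomial (Fin 4) ℂ) := by
  rw [← MulEquiv.prime_iff (finSuccEquiv ℂ 3).toMulEquiv]
  show Prime ((finSuccEquiv ℂ 3) (X 0))
  rw [finSuccEquiv_X_zero]; exact Polynomial.prime_X

lemma prime_X0_sub_one_P4 : Prime ((X 0 : MvPolynomial (Fin 4) ℂ) - 1) := by
  rw [← MulEquiv.prime_iff (finSuccEquiv ℂ 3).toMulEquiv]
  show Prime ((finSuccEquiv ℂ 3) (X 0 - 1))
  have : (finSuccEquiv ℂ 3) ((X 0 : MvPolynomial (Fin 4) ℂ) - 1)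
      = Polynomial.X - Polynomial.C 1 := by
    rw [map_sub, finSuccEquiv_X_zero, map_one, map_one]
  rw [this]; exact Polynomial.prime_X_sub_C 1

lemma prime_X0_P2 : Prime (X 0 : MvPolynomial (Fin 2) ℂ) := by
  rw [← MulEquiv.prime_iff (finSuccEquiv ℂ 1).toMulEquiv]
  show Prime ((finSuccEquiv ℂ 1) (X 0))
  rw [finSuccEquiv_X_zero]; exact Polynomial.prime_X

lemma prime_X1_P2 : Prime (X 1 : MvPolynomial (Fin 2) ℂ) := by
  rw [← MulEquiv.prime_iff (renameEquiv ℂ (Equiv.swap (0:Fin 2) 1)).toMulEquiv]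
  show Prime ((renameEquiv ℂ (Equiv.swap (0:Fin 2) 1)) (X 1))
  rw [renameEquiv_apply, rename_X, Equiv.swap_apply_right]
  exact prime_X0_P2

lemma pow_eq_of_mul_unit {O : Type*} [CommRing O] [IsDomain O] {s : O}
    (hs0 : s ≠ 0) (hsu : ¬IsUnit s) {v w : O} (hv : IsUnit v) (hw : IsUnit w)
    {a b : ℕ} (h : s ^ a * v = s ^ b * w) : a = b := by
  wlog hab : a ≤ b generalizing a b v w
  · exact (this hw hv h.symm (le_of_not_ge hab)).symm
  have h2 : s ^ a * v = s ^ a * (s ^ (b - a) * w) := by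
    rw [h, ← mul_assoc, ← pow_add]
    congr 2
    omega
  have h3 : v = s ^ (b - a) * w := mul_left_cancel₀ (pow_ne_zero a hs0) h2
  rcases Nat.eq_zero_or_pos (b - a) with h4 | h4
  · omega
  · exfalso
    apply hsu
    apply isUnit_of_dvd_unit _ hv
    refine ⟨s ^ (b - a - 1) * w, ?_⟩
    rw [h3, ← mul_assoc, ← pow_succ']
    congr 2
    omega

section Main

variable (p₁ p₂ : Polynomial ℂ) (d₁ d₂ : ℕ)

local notation "P4" => MvPolynomial (Fin 4) ℂ
local notation "P2" => MvPolynomial (Fin 2) ℂ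

def g1 : MvPolynomial (Fin 4) ℂ :=
  X 2 * X 0 ^ d₁ - X 1 + Polynomial.aeval (X 0) p₁.reverse

def g2 : MvPolynomial (Fin 4) ℂ :=
  X 3 * X 1 ^ d₂ - X 0 + Polynomial.aeval (X 1) p₂.reverse

def II : Ideal (MvPolynomial (Fin 4) ℂ) := Ideal.span {g1 p₁ d₁, g2 p₂ d₂}

def qq : MvPolynomial (Fin 4) ℂ := X 2 * X 0 ^ d₁ + Polynomial.aeval (X 0) p₁.reverse

def σh : MvPolynomial (Fin 4) ℂ →ₐ[ℂ] MvPolynomial (Fin 4) ℂ :=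
  aeval ![X 0, qq p₁ d₁, X 2, X 3]

def GG : MvPolynomial (Fin 4) ℂ :=
  X 3 * (qq p₁ d₁) ^ d₂ - X 0 + Polynomial.aeval (qq p₁ d₁) p₂.reverse

def φ₂ : MvPolynomial (Fin 2) ℂ →ₐ[ℂ] MvPolynomial (Fin 4) ℂ := aeval ![X 0, X 1]

lemma σh_X0 : σh p₁ d₁ (X 0) = X 0 := by simp [σh]
lemma σh_X1 : σh p₁ d₁ (X 1) = qq p₁ d₁ := by simp [σh]
lemma σh_X2 : σh p₁ d₁ (X 2) = X 2 := by simp [σh]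
lemma σh_X3 : σh p₁ d₁ (X 3) = X 3 := by simp [σh]

lemma σh_polyaeval (pr : Polynomial ℂ) (x : MvPolynomial (Fin 4) ℂ) :
    σh p₁ d₁ (Polynomial.aeval x pr) = Polynomial.aeval (σh p₁ d₁ x) pr :=
  (Polynomial.aeval_algHom_apply (σh p₁ d₁) x pr).symm

lemma σh_g1 : σh p₁ d₁ (g1 p₁ d₁) = 0 := by
  rw [g1, map_add, map_sub, map_mul, map_pow, σh_X0, σh_X1, σh_X2, σh_polyaeval, σh_X0, qq]
  ring

lemma σh_g2 : σh p₁ d₁ (g2 p₂ d₂) = GG p₁ p₂ d₁ d₂ := by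
  rw [g2, GG, map_add, map_sub, map_mul, map_pow, σh_X0, σh_X1, σh_X3, σh_polyaeval, σh_X1]

lemma g1_eq : g1 p₁ d₁ = qq p₁ d₁ - X 1 := by rw [g1, qq]; ring

lemma sub_σh_mem (f : MvPolynomial (Fin 4) ℂ) :
    f - σh p₁ d₁ f ∈ Ideal.span {g1 p₁ d₁} := by
  induction f using MvPolynomial.induction_on with
  | C a => simp [σh]
  | add f g hf hg =>
      have : f + g - σh p₁ d₁ (f + g) = (f - σh p₁ d₁ f) + (g - σh p₁ d₁ g) := by
        rw [map_add]; ring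
      rw [this]; exact Ideal.add_mem _ hf hg
  | mul_X f i hf =>
      have key : f * X i - σh p₁ d₁ (f * X i)
          = (f - σh p₁ d₁ f) * X i + σh p₁ d₁ f * (X i - σh p₁ d₁ (X i)) := by
        rw [map_mul]; ring
      rw [key]
      refine Ideal.add_mem _ (Ideal.mul_mem_right _ _ hf) ?_
      fin_cases i
      · show σh p₁ d₁ f * (X 0 - σh p₁ d₁ (X 0)) ∈ _
        rw [σh_X0]; simp
      · show σh p₁ d₁ f * (X 1 - σh p₁ d₁ (X 1)) ∈ _
        rw [σh_X1]
        have : (X 1 : MvPolynomial (Fin 4) ℂ) - qq p₁ d₁ = -(g1 p₁ d₁) := by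
          rw [g1_eq]; ring
        rw [this]
        exact Ideal.mul_mem_left _ _ (neg_mem (Ideal.subset_span rfl))
      · show σh p₁ d₁ f * (X 2 - σh p₁ d₁ (X 2)) ∈ _
        rw [σh_X2]; simp
      · show σh p₁ d₁ f * (X 3 - σh p₁ d₁ (X 3)) ∈ _
        rw [σh_X3]; simp

lemma GG_mem : GG p₁ p₂ d₁ d₂ ∈ II p₁ p₂ d₁ d₂ := by
  have h1 : g2 p₂ d₂ - σh p₁ d₁ (g2 p₂ d₂) ∈ Ideal.span {g1 p₁ d₁} := sub_σh_mem _ _ _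
  have h2 : Ideal.span {g1 p₁ d₁} ≤ II p₁ p₂ d₁ d₂ := by
    rw [Ideal.span_le]; intro x hx
    rw [Set.mem_singleton_iff] at hx
    rw [hx]; exact Ideal.subset_span (by left; rfl)
  have h3 : g2 p₂ d₂ ∈ II p₁ p₂ d₁ d₂ := Ideal.subset_span (by right; rfl)
  have := Ideal.sub_mem _ h3 (h2 h1)
  rw [σh_g2] at this
  simpa using this

lemma span_g1_le : Ideal.span {g1 p₁ d₁} ≤ II p₁ p₂ d₁ d₂ := by
  rw [Ideal.span_le]; intro x hx
  rw [Set.mem_singleton_iff] at hx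
  rw [hx]; exact Ideal.subset_span (by left; rfl)

lemma mem_II_iff (f : MvPolynomial (Fin 4) ℂ) :
    f ∈ II p₁ p₂ d₁ d₂ ↔ σh p₁ d₁ f ∈ Ideal.span {GG p₁ p₂ d₁ d₂} := by
  constructor
  · intro hf
    rw [II, Ideal.mem_span_pair] at hf
    obtain ⟨a, b, hab⟩ := hf
    rw [← hab, map_add, map_mul, map_mul, σh_g1, σh_g2, mul_zero, zero_add]
    exact Ideal.mul_mem_left _ _ (Ideal.subset_span rfl)
  · intro hf
    have h1 : f - σh p₁ d₁ f ∈ II p₁ p₂ d₁ d₂ := span_g1_le p₁ p₂ d₁ d₂ (sub_σh_mem p₁ d₁ f)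
    have h2 : σh p₁ d₁ f ∈ II p₁ p₂ d₁ d₂ := by
      rw [Ideal.mem_span_singleton] at hf
      obtain ⟨e, he⟩ := hf
      rw [he]
      exact Ideal.mul_mem_right _ _ (GG_mem p₁ p₂ d₁ d₂)
    simpa using Ideal.add_mem _ h1 h2

def ev0h : MvPolynomial (Fin 4) ℂ →ₐ[ℂ] MvPolynomial (Fin 4) ℂ :=
  aeval ![0, X 1, X 2, X 3]

def ev1h : MvPolynomial (Fin 4) ℂ →ₐ[ℂ] MvPolynomial (Fin 4) ℂ :=
  aeval ![1, X 1, X 2, X 3]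

lemma aeval_zero_eq (pr : Polynomial ℂ) :
    Polynomial.aeval (0 : MvPolynomial (Fin 4) ℂ) pr = C (pr.coeff 0) := by
  rw [Polynomial.aeval_def, Polynomial.eval₂_at_zero]
  rfl

lemma aeval_one_eq (pr : Polynomial ℂ) :
    Polynomial.aeval (1 : MvPolynomial (Fin 4) ℂ) pr = C (pr.eval 1) := by
  have : (1 : MvPolynomial (Fin 4) ℂ) = algebraMap ℂ _ 1 := by rw [map_one]
  rw [this, Polynomial.aeval_algebraMap_apply_eq_algebraMap_eval]
  rfl

lemma ev0h_qq (hm₁ : p₁.Monic) (hd₁ : d₁ = p₁.natDegree + 1) :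
    ev0h (qq p₁ d₁) = 1 := by
  rw [qq, map_add, map_mul, map_pow]
  have h0 : ev0h (X 0) = 0 := by simp [ev0h]
  have hp : ev0h (Polynomial.aeval (X 0) p₁.reverse)
      = Polynomial.aeval (ev0h (X 0)) p₁.reverse :=
    (Polynomial.aeval_algHom_apply ev0h (X 0) p₁.reverse).symm
  rw [hp, h0, aeval_zero_eq, Polynomial.coeff_zero_reverse, hm₁.leadingCoeff]
  rw [zero_pow (by omega : d₁ ≠ 0)]
  simp

lemma ev0h_GG (hm₁ : p₁.Monic) (hd₁ : d₁ = p₁.natDegree + 1) :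
    ev0h (GG p₁ p₂ d₁ d₂) = X 3 + C (p₂.reverse.eval 1) := by
  rw [GG, map_add, map_sub, map_mul, map_pow, ev0h_qq p₁ d₁ hm₁ hd₁]
  have hp : ev0h (Polynomial.aeval (qq p₁ d₁) p₂.reverse)
      = Polynomial.aeval (ev0h (qq p₁ d₁)) p₂.reverse :=
    (Polynomial.aeval_algHom_apply ev0h (qq p₁ d₁) p₂.reverse).symm
  rw [hp, ev0h_qq p₁ d₁ hm₁ hd₁, aeval_one_eq]
  have h0 : ev0h (X 0) = 0 := by simp [ev0h]
  have h3 : ev0h (X 3) = X 3 := by simp [ev0h]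
  rw [h0, h3]
  ring

lemma X3_add_C_ne_zero (e : ℂ) : (X 3 : MvPolynomial (Fin 4) ℂ) + C e ≠ 0 := by
  intro h
  have h3 : (X 3 : MvPolynomial (Fin 4) ℂ) = C (-e) := by
    rw [map_neg]; linear_combination h
  have := congrArg constantCoeff h3
  rw [constantCoeff_X, constantCoeff_C] at this
  have h3' : (X 3 : MvPolynomial (Fin 4) ℂ) = 0 := by rw [h3, ← this]; simp
  exact X_ne_zero _ h3'

lemma X2_add_C_ne_zero (e : ℂ) : (X 2 : MvPolynomial (Fin 4) ℂ) + C e ≠ 0 := by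
  intro h
  have h3 : (X 2 : MvPolynomial (Fin 4) ℂ) = C (-e) := by
    rw [map_neg]; linear_combination h
  have := congrArg constantCoeff h3
  rw [constantCoeff_X, constantCoeff_C] at this
  have h3' : (X 2 : MvPolynomial (Fin 4) ℂ) = 0 := by rw [h3, ← this]; simp
  exact X_ne_zero _ h3'

lemma not_X0_dvd_GG (hm₁ : p₁.Monic) (hd₁ : d₁ = p₁.natDegree + 1) :
    ¬ (X 0 : MvPolynomial (Fin 4) ℂ) ∣ GG p₁ p₂ d₁ d₂ := by
  intro h
  have h2 : ev0h (X 0) ∣ ev0h (GG p₁ p₂ d₁ d₂) := map_dvd _ h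
  have h0 : ev0h (X 0) = 0 := by simp [ev0h]
  rw [h0, zero_dvd_iff, ev0h_GG p₁ p₂ d₁ d₂ hm₁ hd₁] at h2
  exact X3_add_C_ne_zero _ h2

lemma relprime_GG_X0 (hm₁ : p₁.Monic) (hd₁ : d₁ = p₁.natDegree + 1) :
    IsRelPrime (GG p₁ p₂ d₁ d₂) (X 0) := by
  intro d hdG hdX
  obtain ⟨e, he⟩ := hdX
  rcases (prime_X0_P4.irreducible.isUnit_or_isUnit he) with h | h
  · exact h
  · exfalso
    apply not_X0_dvd_GG p₁ p₂ d₁ d₂ hm₁ hd₁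
    obtain ⟨w, hw⟩ := h.exists_right_inv
    have : (X 0 : MvPolynomial (Fin 4) ℂ) ∣ d := ⟨w, by rw [he, mul_assoc, hw, mul_one]⟩
    exact this.trans hdG

lemma qq_dvd_aeval_sub (pr : Polynomial ℂ) :
    qq p₁ d₁ ∣ Polynomial.aeval (qq p₁ d₁) pr - C (pr.coeff 0) := by
  refine ⟨Polynomial.aeval (qq p₁ d₁) pr.divX, ?_⟩
  conv_lhs => rw [← Polynomial.divX_mul_X_add pr]
  rw [map_add, map_mul, Polynomial.aeval_X]
  have : Polynomial.aeval (qq p₁ d₁) (Polynomial.C (pr.coeff 0)) = C (pr.coeff 0) := by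
    rw [Polynomial.aeval_C]; rfl
  rw [this]
  ring_nf
  simp [Polynomial.mul_coeff_zero]

lemma relprime_GG_qq (hm₁ : p₁.Monic) (hm₂ : p₂.Monic)
    (hd₁ : d₁ = p₁.natDegree + 1) (hd₂ : d₂ = p₂.natDegree + 1) :
    IsRelPrime (GG p₁ p₂ d₁ d₂) (qq p₁ d₁) := by
  intro d hdG hdq
  have hdvd1 : d ∣ (1 : MvPolynomial (Fin 4) ℂ) - X 0 := by
    have ha : d ∣ X 3 * (qq p₁ d₁) ^ d₂ := by
      refine Dvd.dvd.mul_left ?_ _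
      exact hdq.trans (dvd_pow_self _ (by omega : d₂ ≠ 0))
    have hb : d ∣ Polynomial.aeval (qq p₁ d₁) p₂.reverse - C (p₂.reverse.coeff 0) :=
      hdq.trans (qq_dvd_aeval_sub p₁ d₁ p₂.reverse)
    have hc : p₂.reverse.coeff 0 = 1 := by
      rw [Polynomial.coeff_zero_reverse, hm₂.leadingCoeff]
    rw [hc] at hb
    have : (1 : MvPolynomial (Fin 4) ℂ) - X 0
        = GG p₁ p₂ d₁ d₂ - X 3 * (qq p₁ d₁) ^ d₂
          - (Polynomial.aeval (qq p₁ d₁) p₂.reverse - C 1) := by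
      rw [GG]
      have : (C (1:ℂ) : MvPolynomial (Fin 4) ℂ) = 1 := map_one _
      rw [this]
      ring
    rw [this]
    exact dvd_sub (dvd_sub hdG ha) hb
  have hneg : d ∣ (X 0 : MvPolynomial (Fin 4) ℂ) - 1 := by
    have := hdvd1.neg_right
    simpa using this
  obtain ⟨e, he⟩ := hneg
  rcases (prime_X0_sub_one_P4.irreducible.isUnit_or_isUnit he) with h | h
  · exact h
  · exfalso
    obtain ⟨w, hw⟩ := h.exists_right_inv
    have hXd : (X 0 : MvPolynomial (Fin 4) ℂ) - 1 ∣ d :=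
      ⟨w, by rw [he, mul_assoc, hw, mul_one]⟩
    have hXq : (X 0 : MvPolynomial (Fin 4) ℂ) - 1 ∣ qq p₁ d₁ := hXd.trans hdq
    have h2 : ev1h ((X 0 : MvPolynomial (Fin 4) ℂ) - 1) ∣ ev1h (qq p₁ d₁) := map_dvd _ hXq
    have h0 : ev1h ((X 0 : MvPolynomial (Fin 4) ℂ) - 1) = 0 := by
      rw [map_sub, map_one]; simp [ev1h]
    rw [h0, zero_dvd_iff] at h2
    apply X2_add_C_ne_zero (p₁.reverse.eval 1)
    rw [← h2, qq, map_add, map_mul, map_pow]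
    have h1 : ev1h (X 0) = 1 := by simp [ev1h]
    have h2' : ev1h (X 2) = X 2 := by simp [ev1h]
    have hp : ev1h (Polynomial.aeval (X 0) p₁.reverse)
        = Polynomial.aeval (ev1h (X 0)) p₁.reverse :=
      (Polynomial.aeval_algHom_apply ev1h (X 0) p₁.reverse).symm
    rw [hp, h1, h2', aeval_one_eq, one_pow, mul_one]

lemma reg (hm₁ : p₁.Monic) (hm₂ : p₂.Monic)
    (hd₁ : d₁ = p₁.natDegree + 1) (hd₂ : d₂ = p₂.natDegree + 1)
    (f : MvPolynomial (Fin 4) ℂ) (h : X 0 * X 1 * f ∈ II p₁ p₂ d₁ d₂) :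
    f ∈ II p₁ p₂ d₁ d₂ := by
  rw [mem_II_iff] at h ⊢
  rw [map_mul, map_mul, σh_X0, σh_X1] at h
  rw [Ideal.mem_span_singleton] at h ⊢
  have h1 : GG p₁ p₂ d₁ d₂ ∣ X 0 * (qq p₁ d₁ * σh p₁ d₁ f) := by
    have e : X 0 * (qq p₁ d₁ * σh p₁ d₁ f) = X 0 * qq p₁ d₁ * σh p₁ d₁ f := by ring
    rw [e]; exact h
  have h2 : GG p₁ p₂ d₁ d₂ ∣ qq p₁ d₁ * σh p₁ d₁ f :=
    (relprime_GG_X0 p₁ p₂ d₁ d₂ hm₁ hd₁).dvd_of_dvd_mul_left h1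
  exact (relprime_GG_qq p₁ p₂ d₁ d₂ hm₁ hm₂ hd₁ hd₂).dvd_of_dvd_mul_left h2

lemma reg_pow (hm₁ : p₁.Monic) (hm₂ : p₂.Monic)
    (hd₁ : d₁ = p₁.natDegree + 1) (hd₂ : d₂ = p₂.natDegree + 1)
    (n : ℕ) (f : MvPolynomial (Fin 4) ℂ) (h : (X 0 * X 1) ^ n * f ∈ II p₁ p₂ d₁ d₂) :
    f ∈ II p₁ p₂ d₁ d₂ := by
  induction n generalizing f with
  | zero => simpa using h
  | succ n ih =>
      apply ih
      apply reg p₁ p₂ d₁ d₂ hm₁ hm₂ hd₁ hd₂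
      have : X 0 * X 1 * ((X 0 * X 1) ^ n * f) = (X 0 * X 1) ^ (n + 1) * f := by ring
      rw [this]
      exact h

lemma φ₂_X0 : φ₂ (X 0) = X 0 := by simp [φ₂]
lemma φ₂_X1 : φ₂ (X 1) = X 1 := by simp [φ₂]

lemma clearing (f : MvPolynomial (Fin 4) ℂ) :
    ∃ (N : ℕ) (h : MvPolynomial (Fin 2) ℂ),
      f * (X 0 * X 1) ^ N - φ₂ h ∈ II p₁ p₂ d₁ d₂ := by
  induction f using MvPolynomial.induction_on with
  | C a =>
      refine ⟨0, C a, ?_⟩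
      have : φ₂ (C a) = C a := by simp [φ₂]
      rw [this]
      simp
  | add f g hf hg =>
      obtain ⟨N, h, hN⟩ := hf
      obtain ⟨M, k, hM⟩ := hg
      refine ⟨N + M, h * (X 0 * X 1) ^ M + k * (X 0 * X 1) ^ N, ?_⟩
      have key : (f + g) * (X 0 * X 1) ^ (N + M)
          - φ₂ (h * (X 0 * X 1) ^ M + k * (X 0 * X 1) ^ N)
          = (f * (X 0 * X 1) ^ N - φ₂ h) * (X 0 * X 1) ^ M
            + (g * (X 0 * X 1) ^ M - φ₂ k) * (X 0 * X 1) ^ N := by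
        rw [map_add, map_mul, map_mul, map_pow, map_pow, map_mul, φ₂_X0, φ₂_X1]
        ring
      rw [key]
      exact Ideal.add_mem _ (Ideal.mul_mem_right _ _ hN) (Ideal.mul_mem_right _ _ hM)
  | mul_X f i hf =>
      obtain ⟨N, h, hN⟩ := hf
      fin_cases i
      · refine ⟨N, h * X 0, ?_⟩
        show f * X 0 * (X 0 * X 1) ^ N - φ₂ (h * X 0) ∈ _
        have key : f * X 0 * (X 0 * X 1) ^ N - φ₂ (h * X 0)
            = (f * (X 0 * X 1) ^ N - φ₂ h) * X 0 := by
          rw [map_mul, φ₂_X0]; ring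
        rw [key]; exact Ideal.mul_mem_right _ _ hN
      · refine ⟨N, h * X 1, ?_⟩
        show f * X 1 * (X 0 * X 1) ^ N - φ₂ (h * X 1) ∈ _
        have key : f * X 1 * (X 0 * X 1) ^ N - φ₂ (h * X 1)
            = (f * (X 0 * X 1) ^ N - φ₂ h) * X 1 := by
          rw [map_mul, φ₂_X1]; ring
        rw [key]; exact Ideal.mul_mem_right _ _ hN
      · -- X 2
        refine ⟨N + d₁, h * ((X 1 - Polynomial.aeval (X 0) p₁.reverse) * X 1 ^ d₁), ?_⟩
        show f * X 2 * (X 0 * X 1) ^ (N + d₁) - φ₂ _ ∈ _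
        have hφ : φ₂ (h * ((X 1 - Polynomial.aeval (X 0) p₁.reverse) * X 1 ^ d₁))
            = φ₂ h * ((X 1 - Polynomial.aeval (X 0) p₁.reverse) * X 1 ^ d₁) := by
          have haev : φ₂ (Polynomial.aeval (X 0) p₁.reverse)
              = Polynomial.aeval (X 0 : MvPolynomial (Fin 4) ℂ) p₁.reverse := by
            rw [← Polynomial.aeval_algHom_apply, φ₂_X0]
          rw [map_mul, map_mul, map_sub, map_pow, φ₂_X1, haev]
        have key : f * X 2 * (X 0 * X 1) ^ (N + d₁)
            - φ₂ h * ((X 1 - Polynomial.aeval (X 0) p₁.reverse) * X 1 ^ d₁)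
            = (f * (X 0 * X 1) ^ N - φ₂ h) * (X 2 * (X 0 * X 1) ^ d₁)
              + (φ₂ h * X 1 ^ d₁ + f * (X 0 * X 1) ^ N * X 1 ^ d₁
                  - f * (X 0 * X 1) ^ N * X 1 ^ d₁) * g1 p₁ d₁ := by
        -- f X2 (w)^{N+d₁} - φ₂h * s = (f w^N - φ₂h) * X2 w^{d₁} + φ₂h * (X2 w^{d₁} - s)
        -- and X2 w^{d₁} - s = g1 * X1^{d₁}
          rw [g1]
          ring
        rw [hφ, key]
        refine Ideal.add_mem _ (Ideal.mul_mem_right _ _ hN) ?_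
        exact Ideal.mul_mem_left _ _ (Ideal.subset_span (by left; rfl))
      · -- X 3
        refine ⟨N + d₂, h * ((X 0 - Polynomial.aeval (X 1) p₂.reverse) * X 0 ^ d₂), ?_⟩
        show f * X 3 * (X 0 * X 1) ^ (N + d₂) - φ₂ _ ∈ _
        have hφ : φ₂ (h * ((X 0 - Polynomial.aeval (X 1) p₂.reverse) * X 0 ^ d₂))
            = φ₂ h * ((X 0 - Polynomial.aeval (X 1) p₂.reverse) * X 0 ^ d₂) := by
          have haev : φ₂ (Polynomial.aeval (X 1) p₂.reverse)
              = Polynomial.aeval (X 1 : MvPolynomial (Fin 4) ℂ) p₂.reverse := by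
            rw [← Polynomial.aeval_algHom_apply, φ₂_X1]
          rw [map_mul, map_mul, map_sub, map_pow, φ₂_X0, haev]
        have key : f * X 3 * (X 0 * X 1) ^ (N + d₂)
            - φ₂ h * ((X 0 - Polynomial.aeval (X 1) p₂.reverse) * X 0 ^ d₂)
            = (f * (X 0 * X 1) ^ N - φ₂ h) * (X 3 * (X 0 * X 1) ^ d₂)
              + (φ₂ h * X 0 ^ d₂ + f * (X 0 * X 1) ^ N * X 0 ^ d₂
                  - f * (X 0 * X 1) ^ N * X 0 ^ d₂) * g2 p₂ d₂ := by
          rw [g2]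
          ring
        rw [hφ, key]
        refine Ideal.add_mem _ (Ideal.mul_mem_right _ _ hN) ?_
        exact Ideal.mul_mem_left _ _ (Ideal.subset_span (by right; rfl))

-- ## The generic point: injectivity of the 2-variable part

abbrev FF := FractionRing (MvPolynomial (Fin 2) ℂ)

set_option synthInstance.maxHeartbeats 1000000 in
instance instAlgCFF : Algebra ℂ FF := inferInstance

set_option synthInstance.maxHeartbeats 1000000 in
instance instTowerCFF : IsScalarTower ℂ (MvPolynomial (Fin 2) ℂ) FF := inferInstance

def xx : FF := algebraMap (MvPolynomial (Fin 2) ℂ) FF (X 0)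
def yy : FF := algebraMap (MvPolynomial (Fin 2) ℂ) FF (X 1)

lemma xx_ne_zero : xx ≠ 0 := by
  rw [xx, Ne, map_eq_zero_iff _ (IsFractionRing.injective _ _)]
  exact X_ne_zero 0

lemma yy_ne_zero : yy ≠ 0 := by
  rw [yy, Ne, map_eq_zero_iff _ (IsFractionRing.injective _ _)]
  exact X_ne_zero 1

def Ψh : MvPolynomial (Fin 4) ℂ →ₐ[ℂ] FF :=
  aeval ![xx, yy, (yy - Polynomial.aeval xx p₁.reverse) / xx ^ d₁,
    (xx - Polynomial.aeval yy p₂.reverse) / yy ^ d₂]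

lemma Ψh_X0 : Ψh p₁ p₂ d₁ d₂ (X 0) = xx := by simp [Ψh]
lemma Ψh_X1 : Ψh p₁ p₂ d₁ d₂ (X 1) = yy := by simp [Ψh]
lemma Ψh_X2 : Ψh p₁ p₂ d₁ d₂ (X 2) = (yy - Polynomial.aeval xx p₁.reverse) / xx ^ d₁ := by
  simp [Ψh]
lemma Ψh_X3 : Ψh p₁ p₂ d₁ d₂ (X 3) = (xx - Polynomial.aeval yy p₂.reverse) / yy ^ d₂ := by
  simp [Ψh]

lemma Ψh_g1 : Ψh p₁ p₂ d₁ d₂ (g1 p₁ d₁) = 0 := by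
  rw [g1, map_add, map_sub, map_mul, map_pow, Ψh_X0, Ψh_X1, Ψh_X2,
    ← Polynomial.aeval_algHom_apply, Ψh_X0]
  rw [div_mul_cancel₀ _ (pow_ne_zero d₁ xx_ne_zero)]
  ring

lemma Ψh_g2 : Ψh p₁ p₂ d₁ d₂ (g2 p₂ d₂) = 0 := by
  rw [g2, map_add, map_sub, map_mul, map_pow, Ψh_X0, Ψh_X1, Ψh_X3,
    ← Polynomial.aeval_algHom_apply, Ψh_X1]
  rw [div_mul_cancel₀ _ (pow_ne_zero d₂ yy_ne_zero)]
  ring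

lemma II_le_ker_Ψh : II p₁ p₂ d₁ d₂ ≤ RingHom.ker (Ψh p₁ p₂ d₁ d₂).toRingHom := by
  rw [II, Ideal.span_le]
  intro x hx
  simp only [Set.mem_insert_iff, Set.mem_singleton_iff] at hx
  rcases hx with rfl | rfl
  · exact Ψh_g1 p₁ p₂ d₁ d₂
  · exact Ψh_g2 p₁ p₂ d₁ d₂

lemma Ψh_φ₂ (h : MvPolynomial (Fin 2) ℂ) :
    Ψh p₁ p₂ d₁ d₂ (φ₂ h) = algebraMap (MvPolynomial (Fin 2) ℂ) FF h := by
  have : (Ψh p₁ p₂ d₁ d₂).comp φ₂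
      = IsScalarTower.toAlgHom ℂ (MvPolynomial (Fin 2) ℂ) FF := by
    apply MvPolynomial.algHom_ext
    intro i
    fin_cases i
    · show Ψh p₁ p₂ d₁ d₂ (φ₂ (X 0)) = _
      rw [φ₂_X0, Ψh_X0]; rfl
    · show Ψh p₁ p₂ d₁ d₂ (φ₂ (X 1)) = _
      rw [φ₂_X1, Ψh_X1]; rfl
  have := congrArg (fun f => f h) this
  simpa using this

lemma φ₂_mem_II (h : MvPolynomial (Fin 2) ℂ) (hh : φ₂ h ∈ II p₁ p₂ d₁ d₂) : h = 0 := by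
  have h1 : Ψh p₁ p₂ d₁ d₂ (φ₂ h) = 0 := II_le_ker_Ψh p₁ p₂ d₁ d₂ hh
  rw [Ψh_φ₂] at h1
  exact (map_eq_zero_iff _ (IsFractionRing.injective _ _)).mp h1

-- ## The curves through the boundary points

instance primeIdealX : (Ideal.span {(Polynomial.X : Polynomial ℂ)}).IsPrime :=
  (Ideal.span_singleton_prime Polynomial.X_ne_zero).mpr Polynomial.prime_X

abbrev OO := Localization.AtPrime (Ideal.span {(Polynomial.X : Polynomial ℂ)})

instance instAlgCOO : Algebra ℂ OO := inferInstance
instance instTowerCOO : IsScalarTower ℂ (Polynomial ℂ) OO := inferInstance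
instance instDomainOO : IsDomain OO :=
  IsLocalization.isDomain_of_local_atPrime (primeIdealX)

def SS : OO := algebraMap (Polynomial ℂ) OO Polynomial.X

lemma algebraMap_OO_injective :
    Function.Injective (algebraMap (Polynomial ℂ) OO) :=
  IsLocalization.injective (M := (Ideal.span {(Polynomial.X : Polynomial ℂ)}).primeCompl)
    OO (Ideal.primeCompl_le_nonZeroDivisors _)

lemma SS_ne_zero : SS ≠ 0 := by
  rw [SS, Ne, map_eq_zero_iff _ algebraMap_OO_injective]
  exact Polynomial.X_ne_zero

lemma SS_not_unit : ¬ IsUnit SS := by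
  rw [SS, IsLocalization.AtPrime.isUnit_to_map_iff OO
    (Ideal.span {(Polynomial.X : Polynomial ℂ)}) Polynomial.X]
  intro h
  exact h (Ideal.subset_span rfl)

lemma isUnit_algebraMap_OO (r : Polynomial ℂ) (hr : r.coeff 0 ≠ 0) :
    IsUnit (algebraMap (Polynomial ℂ) OO r) := by
  rw [IsLocalization.AtPrime.isUnit_to_map_iff OO
    (Ideal.span {(Polynomial.X : Polynomial ℂ)}) r]
  intro h
  have h' : r ∈ Ideal.span {(Polynomial.X : Polynomial ℂ)} := h
  rw [Ideal.mem_span_singleton, Polynomial.X_dvd_iff] at h'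
  exact hr h'

lemma aeval_algebraMap_OO (r : Polynomial ℂ) (v : Polynomial ℂ) :
    Polynomial.aeval (algebraMap (Polynomial ℂ) OO v) r
      = algebraMap (Polynomial ℂ) OO (Polynomial.aeval v r) :=
  Polynomial.aeval_algHom_apply (IsScalarTower.toAlgHom ℂ (Polynomial ℂ) OO) v r

-- first curve : x₁ = s, x₂ = p̂₁(s), y₁ = 0, y₂ = (s - p̂₂(p̂₁(s)))/p̂₁(s)^{d₂}
def AA1 : OO := algebraMap (Polynomial ℂ) OO p₁.reverse

def BB1 : OO :=
  Ring.inverse (AA1 p₁ ^ d₂)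
    * algebraMap (Polynomial ℂ) OO (Polynomial.X - Polynomial.aeval p₁.reverse p₂.reverse)

def Φ1 : MvPolynomial (Fin 4) ℂ →ₐ[ℂ] OO := aeval ![SS, AA1 p₁, 0, BB1 p₁ p₂ d₂]

lemma AA1_unit (hm₁ : p₁.Monic) : IsUnit (AA1 p₁) := by
  apply isUnit_algebraMap_OO
  rw [Polynomial.coeff_zero_reverse, hm₁.leadingCoeff]
  exact one_ne_zero

lemma Φ1_X0 : Φ1 p₁ p₂ d₂ (X 0) = SS := by simp [Φ1]
lemma Φ1_X1 : Φ1 p₁ p₂ d₂ (X 1) = AA1 p₁ := by simp [Φ1]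
lemma Φ1_X2 : Φ1 p₁ p₂ d₂ (X 2) = 0 := by simp [Φ1]
lemma Φ1_X3 : Φ1 p₁ p₂ d₂ (X 3) = BB1 p₁ p₂ d₂ := by simp [Φ1]

lemma Φ1_g1 : Φ1 p₁ p₂ d₂ (g1 p₁ d₁) = 0 := by
  rw [g1, map_add, map_sub, map_mul, map_pow, Φ1_X0, Φ1_X1, Φ1_X2,
    ← Polynomial.aeval_algHom_apply, Φ1_X0, SS, aeval_algebraMap_OO,
    Polynomial.aeval_X_left_apply, ← AA1]
  ring

lemma Φ1_g2 (hm₁ : p₁.Monic) : Φ1 p₁ p₂ d₂ (g2 p₂ d₂) = 0 := by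
  rw [g2, map_add, map_sub, map_mul, map_pow, Φ1_X0, Φ1_X1, Φ1_X3,
    ← Polynomial.aeval_algHom_apply, Φ1_X1, AA1, aeval_algebraMap_OO]
  rw [BB1]
  have hAAdef : (algebraMap (Polynomial ℂ) OO) p₁.reverse = AA1 p₁ := rfl
  rw [hAAdef]
  have hu : IsUnit (AA1 p₁ ^ d₂) := (AA1_unit p₁ hm₁).pow d₂
  have : Ring.inverse (AA1 p₁ ^ d₂)
      * algebraMap (Polynomial ℂ) OO (Polynomial.X - Polynomial.aeval p₁.reverse p₂.reverse)
      * AA1 p₁ ^ d₂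
      = algebraMap (Polynomial ℂ) OO (Polynomial.X - Polynomial.aeval p₁.reverse p₂.reverse)
        * (Ring.inverse (AA1 p₁ ^ d₂) * AA1 p₁ ^ d₂) := by ring
  rw [this, Ring.inverse_mul_cancel _ hu, mul_one, map_sub, ← SS]
  ring

-- second curve : x₂ = s, x₁ = p̂₂(s), y₂ = 0, y₁ = (s - p̂₁(p̂₂(s)))/p̂₂(s)^{d₁}
def AA2 : OO := algebraMap (Polynomial ℂ) OO p₂.reverse

def BB2 : OO :=
  Ring.inverse (AA2 p₂ ^ d₁)
    * algebraMap (Polynomial ℂ) OO (Polynomial.X - Polynomial.aeval p₂.reverse p₁.reverse)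

def Φ2 : MvPolynomial (Fin 4) ℂ →ₐ[ℂ] OO := aeval ![AA2 p₂, SS, BB2 p₁ p₂ d₁, 0]

lemma AA2_unit (hm₂ : p₂.Monic) : IsUnit (AA2 p₂) := by
  apply isUnit_algebraMap_OO
  rw [Polynomial.coeff_zero_reverse, hm₂.leadingCoeff]
  exact one_ne_zero

lemma Φ2_X0 : Φ2 p₁ p₂ d₁ (X 0) = AA2 p₂ := by simp [Φ2]
lemma Φ2_X1 : Φ2 p₁ p₂ d₁ (X 1) = SS := by simp [Φ2]
lemma Φ2_X2 : Φ2 p₁ p₂ d₁ (X 2) = BB2 p₁ p₂ d₁ := by simp [Φ2]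
lemma Φ2_X3 : Φ2 p₁ p₂ d₁ (X 3) = 0 := by simp [Φ2]

lemma Φ2_g2 : Φ2 p₁ p₂ d₁ (g2 p₂ d₂) = 0 := by
  rw [g2, map_add, map_sub, map_mul, map_pow, Φ2_X0, Φ2_X1, Φ2_X3,
    ← Polynomial.aeval_algHom_apply, Φ2_X1, SS, aeval_algebraMap_OO,
    Polynomial.aeval_X_left_apply, ← AA2]
  ring

lemma Φ2_g1 (hm₂ : p₂.Monic) : Φ2 p₁ p₂ d₁ (g1 p₁ d₁) = 0 := by
  rw [g1, map_add, map_sub, map_mul, map_pow, Φ2_X0, Φ2_X1, Φ2_X2,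
    ← Polynomial.aeval_algHom_apply, Φ2_X0, AA2, aeval_algebraMap_OO]
  rw [BB2]
  have hAAdef : (algebraMap (Polynomial ℂ) OO) p₂.reverse = AA2 p₂ := rfl
  rw [hAAdef]
  have hu : IsUnit (AA2 p₂ ^ d₁) := (AA2_unit p₂ hm₂).pow d₁
  have : Ring.inverse (AA2 p₂ ^ d₁)
      * algebraMap (Polynomial ℂ) OO (Polynomial.X - Polynomial.aeval p₂.reverse p₁.reverse)
      * AA2 p₂ ^ d₁
      = algebraMap (Polynomial ℂ) OO (Polynomial.X - Polynomial.aeval p₂.reverse p₁.reverse)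
        * (Ring.inverse (AA2 p₂ ^ d₁) * AA2 p₂ ^ d₁) := by ring
  rw [this, Ring.inverse_mul_cancel _ hu, mul_one, map_sub, ← SS]
  ring

lemma II_le_ker_Φ1 (hm₁ : p₁.Monic) :
    II p₁ p₂ d₁ d₂ ≤ RingHom.ker (Φ1 p₁ p₂ d₂).toRingHom := by
  rw [II, Ideal.span_le]
  intro x hx
  simp only [Set.mem_insert_iff, Set.mem_singleton_iff] at hx
  rcases hx with rfl | rfl
  · exact Φ1_g1 p₁ p₂ d₁ d₂
  · exact Φ1_g2 p₁ p₂ d₂ hm₁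

lemma II_le_ker_Φ2 (hm₂ : p₂.Monic) :
    II p₁ p₂ d₁ d₂ ≤ RingHom.ker (Φ2 p₁ p₂ d₁).toRingHom := by
  rw [II, Ideal.span_le]
  intro x hx
  simp only [Set.mem_insert_iff, Set.mem_singleton_iff] at hx
  rcases hx with rfl | rfl
  · exact Φ2_g1 p₁ p₂ d₁ hm₂
  · exact Φ2_g2 p₁ p₂ d₁ d₂

end Main

end Stmt16Aux

open Stmt16Aux in
/-- Every unit of the coordinate ring of `S_{p₁,p₂}` is a nonzero constant. -/
theorem stmt_16 (p₁ p₂ : Polynomial ℂ) (hm₁ : p₁.Monic) (hm₂ : p₂.Monic)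
    (d₁ d₂ : ℕ) (hd₁ : d₁ = p₁.natDegree + 1) (hd₂ : d₂ = p₂.natDegree + 1) :
    ∀ u : (SRing p₁ p₂ d₁ d₂)ˣ, ∃ c : ℂˣ,
      (u : SRing p₁ p₂ d₁ d₂) = algebraMap ℂ (SRing p₁ p₂ d₁ d₂) (c : ℂ) := by
  intro u
  classical
  have hIeq : Ideal.span (srel p₁ p₂ d₁ d₂) = II p₁ p₂ d₁ d₂ := rfl
  set J := Ideal.span (srel p₁ p₂ d₁ d₂) with hJ
  let mk : MvPolynomial (Fin 4) ℂ →+* SRing p₁ p₂ d₁ d₂ := Ideal.Quotient.mk J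
  obtain ⟨f, hf⟩ := Ideal.Quotient.mk_surjective ((u : SRing p₁ p₂ d₁ d₂))
  obtain ⟨g, hg⟩ := Ideal.Quotient.mk_surjective (((u⁻¹ : (SRing p₁ p₂ d₁ d₂)ˣ) :
    SRing p₁ p₂ d₁ d₂))
  obtain ⟨N, h, hN⟩ := clearing p₁ p₂ d₁ d₂ f
  obtain ⟨M, k, hM⟩ := clearing p₁ p₂ d₁ d₂ g
  have hmk_eq : ∀ x y : MvPolynomial (Fin 4) ℂ, x - y ∈ II p₁ p₂ d₁ d₂ → mk x = mk y := by
    intro x y hxy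
    rw [Ideal.Quotient.mk_eq_mk_iff_sub_mem, hIeq]
    exact hxy
  have e1 : mk f * mk (X 0 * X 1) ^ N = mk (φ₂ h) := by
    have := hmk_eq _ _ hN
    rw [map_mul, map_pow] at this
    exact this
  have e2 : mk g * mk (X 0 * X 1) ^ M = mk (φ₂ k) := by
    have := hmk_eq _ _ hM
    rw [map_mul, map_pow] at this
    exact this
  have e3 : mk f * mk g = 1 := by
    rw [hf, hg]
    exact_mod_cast u.mul_inv
  -- h * k = (x₁ x₂)^(N+M) in the 2-variable polynomial ring
  have hhk : h * k = (X 0 * X 1 : MvPolynomial (Fin 2) ℂ) ^ (N + M) := by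
    have hq : mk (φ₂ (h * k)) = mk (φ₂ ((X 0 * X 1 : MvPolynomial (Fin 2) ℂ) ^ (N + M))) := by
      rw [map_mul, map_mul, map_pow, map_mul, φ₂_X0, φ₂_X1, map_pow, map_mul]
      calc mk (φ₂ h) * mk (φ₂ k) = (mk f * mk (X 0 * X 1) ^ N) * (mk g * mk (X 0 * X 1) ^ M) := by
            rw [e1, e2]
        _ = (mk f * mk g) * (mk (X 0) * mk (X 1)) ^ (N + M) := by rw [map_mul]; ring
        _ = (mk (X 0) * mk (X 1)) ^ (N + M) := by rw [e3, one_mul]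
    rw [Ideal.Quotient.mk_eq_mk_iff_sub_mem, ← map_sub, hIeq] at hq
    have := φ₂_mem_II p₁ p₂ d₁ d₂ _ hq
    rwa [sub_eq_zero] at this
  -- factor h
  have hdvd : h ∣ (X 0 : MvPolynomial (Fin 2) ℂ) ^ (N + M) * X 1 ^ (N + M) := by
    refine ⟨k, ?_⟩
    rw [← mul_pow, ← hhk]
  obtain ⟨a, b, ha, hb, hab⟩ := exists_dvd_and_dvd_of_dvd_mul hdvd
  obtain ⟨i, hiK, hia⟩ := (dvd_prime_pow prime_X0_P2 _).mp ha
  obtain ⟨j, hjK, hjb⟩ := (dvd_prime_pow prime_X1_P2 _).mp hb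
  obtain ⟨ua, hua⟩ := hia.symm
  obtain ⟨ub, hub⟩ := hjb.symm
  obtain ⟨c, hc⟩ := unit_eq_C ((↑ua : MvPolynomial (Fin 2) ℂ) * ↑ub)
    ((ua.isUnit).mul ub.isUnit)
  have hh : h = C (c : ℂ) * X 0 ^ i * X 1 ^ j := by
    rw [hab, ← hua, ← hub, ← hc]
    ring
  have hCc2 : φ₂ (C (c : ℂ)) = C (c : ℂ) := by
    rw [show (C (c : ℂ) : MvPolynomial (Fin 2) ℂ) = algebraMap ℂ _ (c : ℂ) from rfl,
      AlgHom.commutes]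
    rfl
  have hφ4 : φ₂ h = C (c : ℂ) * X 0 ^ i * X 1 ^ j := by
    rw [hh, map_mul, map_mul, map_pow, map_pow, φ₂_X0, φ₂_X1, hCc2]
  have e4 : mk (f * (X 0 * X 1) ^ N) = mk (C (c : ℂ) * X 0 ^ i * X 1 ^ j) := by
    rw [map_mul, map_pow, e1, hφ4]
  -- first curve: i = N
  have hker1 : ∀ x ∈ J, (Φ1 p₁ p₂ d₂).toRingHom x = 0 := by
    intro x hx
    exact II_le_ker_Φ1 p₁ p₂ d₁ d₂ hm₁ (hIeq ▸ hx)
  let Φ1q : SRing p₁ p₂ d₁ d₂ →+* OO := Ideal.Quotient.lift J (Φ1 p₁ p₂ d₂).toRingHom hker1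
  have hΦ1mk : ∀ x, Φ1q (mk x) = Φ1 p₁ p₂ d₂ x := fun x => rfl
  have hu1 : IsUnit (Φ1 p₁ p₂ d₂ f) := by
    rw [← hΦ1mk, hf]
    exact u.isUnit.map Φ1q
  have hCcOO : Φ1 p₁ p₂ d₂ (C (c : ℂ)) = algebraMap ℂ OO (c : ℂ) := by
    rw [show (C (c : ℂ) : MvPolynomial (Fin 4) ℂ) = algebraMap ℂ _ (c : ℂ) from rfl,
      AlgHom.commutes]
  have ec1 := congrArg Φ1q e4
  rw [hΦ1mk, hΦ1mk, map_mul, map_pow, map_mul, Φ1_X0, Φ1_X1,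
    map_mul, map_mul, map_pow, map_pow, Φ1_X0, Φ1_X1, hCcOO] at ec1
  have hAau : IsUnit (AA1 p₁) := AA1_unit p₁ hm₁
  have hcu : IsUnit (algebraMap ℂ OO (c : ℂ)) := (c.isUnit).map (algebraMap ℂ OO)
  have hiN : i = N := by
    have heq : SS ^ i * (algebraMap ℂ OO (c : ℂ) * AA1 p₁ ^ j)
        = SS ^ N * (Φ1 p₁ p₂ d₂ f * AA1 p₁ ^ N) := by
      linear_combination -ec1
    exact pow_eq_of_mul_unit SS_ne_zero SS_not_unit
      (hcu.mul (hAau.pow j)) (hu1.mul (hAau.pow N)) heq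
  -- second curve: j = N
  have hker2 : ∀ x ∈ J, (Φ2 p₁ p₂ d₁).toRingHom x = 0 := by
    intro x hx
    exact II_le_ker_Φ2 p₁ p₂ d₁ d₂ hm₂ (hIeq ▸ hx)
  let Φ2q : SRing p₁ p₂ d₁ d₂ →+* OO := Ideal.Quotient.lift J (Φ2 p₁ p₂ d₁).toRingHom hker2
  have hΦ2mk : ∀ x, Φ2q (mk x) = Φ2 p₁ p₂ d₁ x := fun x => rfl
  have hu2 : IsUnit (Φ2 p₁ p₂ d₁ f) := by
    rw [← hΦ2mk, hf]
    exact u.isUnit.map Φ2q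
  have hCcOO2 : Φ2 p₁ p₂ d₁ (C (c : ℂ)) = algebraMap ℂ OO (c : ℂ) := by
    rw [show (C (c : ℂ) : MvPolynomial (Fin 4) ℂ) = algebraMap ℂ _ (c : ℂ) from rfl,
      AlgHom.commutes]
  have ec2 := congrArg Φ2q e4
  rw [hΦ2mk, hΦ2mk, map_mul, map_pow, map_mul, Φ2_X0, Φ2_X1,
    map_mul, map_mul, map_pow, map_pow, Φ2_X0, Φ2_X1, hCcOO2] at ec2
  have hAau2 : IsUnit (AA2 p₂) := AA2_unit p₂ hm₂
  have hjN : j = N := by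
    have heq : SS ^ j * (algebraMap ℂ OO (c : ℂ) * AA2 p₂ ^ i)
        = SS ^ N * (Φ2 p₁ p₂ d₁ f * AA2 p₂ ^ N) := by
      linear_combination -ec2
    exact pow_eq_of_mul_unit SS_ne_zero SS_not_unit
      (hcu.mul (hAau2.pow i)) (hu2.mul (hAau2.pow N)) heq
  -- conclude by regularity
  rw [hiN, hjN] at e4
  have e5' : mk f * mk (X 0 * X 1) ^ N = mk (C (c : ℂ)) * mk (X 0 * X 1) ^ N := by
    have := e4
    rw [map_mul, map_pow] at this
    rw [this, map_mul, map_mul, map_pow, map_pow, map_mul, mul_pow]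
    ring
  have e5 : mk ((f - C (c : ℂ)) * (X 0 * X 1) ^ N) = 0 := by
    rw [map_mul, map_sub, map_pow, sub_mul, sub_eq_zero]
    exact e5'
  rw [Ideal.Quotient.eq_zero_iff_mem, hIeq] at e5
  have e6 : f - C (c : ℂ) ∈ II p₁ p₂ d₁ d₂ := by
    apply reg_pow p₁ p₂ d₁ d₂ hm₁ hm₂ hd₁ hd₂ N
    have hcomm : (X 0 * X 1) ^ N * (f - C (c : ℂ))
        = (f - C (c : ℂ)) * (X 0 * X 1) ^ N := by ring
    rw [hcomm]
    exact e5
  refine ⟨c, ?_⟩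
  rw [← hf]
  have halg : algebraMap ℂ (SRing p₁ p₂ d₁ d₂) (c : ℂ) = mk (C (c : ℂ)) := rfl
  rw [halg]
  exact hmk_eq _ _ e6
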